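/- arXiv:1912.03096 — 2 statements merged into one kernel-verified Lean document; each statement's English description precedes it below -/
import Mathlib

section
/- Let $0<|x|<1$, $r>1$, $s = r+1$, and define for $i,j \geq 0$ the formal power series $f_{i,j}(z)=\exp\left(-\sum_{m=1}^\infty \frac{1}{m}\frac{[(r-1)m]_x[rm]_x[\min(i,j)m]_x[(s-\max(i,j))m]_x}{[m]_x[sm]_x}(x-x^{-1})^2 z^m\right)$. Then for all $1 \leq i \leq j$, $f_{i,j}(z) = \prod_{k=1}^{i} f_{1,j}(x^{-i-1+2k} z)$ as formal power series in $z$. -/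
/-- The q-integer with real index: `[a]_x = (x^a - x^{-a})/(x - x⁻¹)`. -/
noncomputable def qint (x a : ℝ) : ℝ := (x ^ a - x ^ (-a)) / (x - x⁻¹)

/-- The structure function
`f_{i,j}(z) = exp(-∑_{m≥1} (1/m) [(r-1)m][rm][min(i,j)m][(s-max(i,j))m]/([m][sm]) (x-x⁻¹)² z^m)`
with `s = r+1`, as a function of `z` (convergent for small `‖z‖`). -/
noncomputable def ff (x r : ℝ) (i j : ℕ) (z : ℂ) : ℂ :=
  Complex.exp (-∑' m : ℕ,
    ((qint x ((r - 1) * (m + 1)) * qint x (r * (m + 1)) * qint x ((min i j : ℝ) * (m + 1)) *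
        qint x ((r + 1 - (max i j : ℝ)) * (m + 1)) /
        (qint x ((m : ℝ) + 1) * qint x ((r + 1) * (m + 1))) * (x - x⁻¹) ^ 2 : ℝ) : ℂ)
      * z ^ (m + 1) / ((m : ℂ) + 1))

/-- The rational function `Δ_i(z) = (1-x^{2r-i}z)(1-x^{-2r+i}z)/((1-x^i z)(1-x^{-i}z))`. -/
noncomputable def Dlt (x r : ℝ) (i : ℕ) (z : ℂ) : ℂ :=
  ((1 - ((x ^ (2 * r - (i : ℝ)) : ℝ) : ℂ) * z) * (1 - ((x ^ ((i : ℝ) - 2 * r) : ℝ) : ℂ) * z)) /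
    ((1 - ((x ^ (i : ℝ) : ℝ) : ℂ) * z) * (1 - ((x ^ (-(i : ℝ)) : ℝ) : ℂ) * z))

lemma qint_mul_sum (x : ℝ) (hx0 : 0 < x) (M : ℝ) (i : ℕ) :
    qint x (i * M) = qint x M * ∑ k ∈ Finset.Icc 1 i, x ^ ((2 * (k : ℝ) - i - 1) * M) := by
  unfold qint
  rw [div_mul_eq_mul_div]
  congr 1
  have tele := Finset.sum_range_sub (fun t : ℕ => x ^ ((2 * (t : ℝ) - i) * M)) i
  have hterm : ∀ a : ℝ, (x ^ M - x ^ (-M)) * x ^ (a * M) = x ^ ((a+1)*M) - x ^ ((a-1)*M) := by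
    intro a
    rw [sub_mul, ← Real.rpow_add hx0, ← Real.rpow_add hx0]
    congr 2 <;> ring
  calc x ^ ((i : ℝ) * M) - x ^ (-((i : ℝ) * M))
      = x ^ ((2 * (i : ℝ) - i) * M) - x ^ ((2 * ((0:ℕ) : ℝ) - i) * M) := by
        push_cast; congr 2 <;> ring
    _ = ∑ t ∈ Finset.range i,
          (x ^ ((2 * ((t+1 : ℕ) : ℝ) - i) * M) - x ^ ((2 * (t : ℝ) - i) * M)) := tele.symm
    _ = (x ^ M - x ^ (-M)) * ∑ k ∈ Finset.Icc 1 i, x ^ ((2 * (k : ℝ) - i - 1) * M) := by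
        rw [Finset.mul_sum, ← Finset.Ico_add_one_right_eq_Icc, Finset.sum_Ico_eq_sum_range]
        refine Finset.sum_congr (by simp) fun t _ => ?_
        rw [hterm]
        congr 2 <;> push_cast <;> ring

noncomputable def cf (x r : ℝ) (i j : ℕ) (m : ℕ) : ℝ :=
  qint x ((r - 1) * (m + 1)) * qint x (r * (m + 1)) * qint x ((min i j : ℝ) * (m + 1)) *
      qint x ((r + 1 - (max i j : ℝ)) * (m + 1)) /
      (qint x ((m : ℝ) + 1) * qint x ((r + 1) * (m + 1))) * (x - x⁻¹) ^ 2

lemma ff_eq (x r : ℝ) (i j : ℕ) (z : ℂ) :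
    ff x r i j z = Complex.exp (-∑' m : ℕ,
      ((cf x r i j m : ℝ) : ℂ) * z ^ (m + 1) / ((m : ℂ) + 1)) := rfl

lemma cf_eq (x r : ℝ) (hx0 : 0 < x) (i j m : ℕ) (hi : 1 ≤ i) (hij : i ≤ j) :
    cf x r i j m = ∑ k ∈ Finset.Icc 1 i,
      cf x r 1 j m * x ^ ((2 * (k : ℝ) - i - 1) * ((m : ℝ) + 1)) := by
  have hj : (1:ℝ) ≤ (j:ℝ) := by exact_mod_cast hi.trans hij
  have hij' : (i:ℝ) ≤ (j:ℝ) := by exact_mod_cast hij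
  unfold cf
  rw [min_eq_left hij', max_eq_right hij', min_eq_left (by exact_mod_cast hj),
      max_eq_right (by exact_mod_cast hj)]
  rw [qint_mul_sum x hx0 ((m:ℝ)+1) i]
  simp only [Nat.cast_one, one_mul]
  rw [← Finset.mul_sum]
  ring

lemma summand_eq (x r : ℝ) (hx0 : 0 < x) (i j m : ℕ) (hi : 1 ≤ i) (hij : i ≤ j) (z : ℂ) :
    ((cf x r i j m : ℝ) : ℂ) * z ^ (m + 1) / ((m : ℂ) + 1)
      = ∑ k ∈ Finset.Icc 1 i,
        ((cf x r 1 j m : ℝ) : ℂ) * (((x ^ (2 * (k : ℤ) - i - 1) : ℝ) : ℂ) * z) ^ (m + 1)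
          / ((m : ℂ) + 1) := by
  rw [cf_eq x r hx0 i j m hi hij]
  rw [Complex.ofReal_sum, Finset.sum_mul, Finset.sum_div]
  refine Finset.sum_congr rfl fun k _ => ?_
  have hp : x ^ ((2 * (k : ℝ) - i - 1) * ((m : ℝ) + 1))
      = (x ^ (2 * (k : ℤ) - i - 1)) ^ (m + 1) := by
    rw [← Real.rpow_intCast x (2 * (k : ℤ) - i - 1),
        ← Real.rpow_natCast (x ^ (((2 * (k : ℤ) - i - 1) : ℤ) : ℝ)) (m + 1),
        ← Real.rpow_mul hx0.le]
    congr 1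
    push_cast
    ring
  rw [hp]
  push_cast
  ring

lemma qint_pos_form (x a : ℝ) : qint x a = (x ^ (-a) - x ^ a) / (x⁻¹ - x) := by
  unfold qint
  rw [← neg_sub (x ^ (-a)), ← neg_sub x⁻¹, neg_div_neg_eq]

lemma Dpos (x : ℝ) (hx0 : 0 < x) (hx1 : x < 1) : 0 < x⁻¹ - x := by
  have h1 : x * x⁻¹ = 1 := mul_inv_cancel₀ hx0.ne'
  nlinarith

lemma one_le_qint (x a : ℝ) (hx0 : 0 < x) (hx1 : x < 1) (ha : 1 ≤ a) : 1 ≤ qint x a := by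
  rw [qint_pos_form]
  rw [le_div_iff₀ (Dpos x hx0 hx1), one_mul]
  have h1 : x ^ (-1 : ℝ) ≤ x ^ (-a) :=
    Real.rpow_le_rpow_of_exponent_ge hx0 hx1.le (by linarith)
  have h2 : x ^ a ≤ x ^ (1 : ℝ) :=
    Real.rpow_le_rpow_of_exponent_ge hx0 hx1.le ha
  rw [Real.rpow_one] at h2
  rw [Real.rpow_neg_one] at h1
  linarith

lemma qint_abs_le (x a b : ℝ) (hx0 : 0 < x) (hx1 : x < 1) (hab : |a| ≤ b) :
    |qint x a| ≤ 2 * x ^ (-b) / (x⁻¹ - x) := by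
  have hD := Dpos x hx0 hx1
  rw [qint_pos_form, abs_div, abs_of_pos hD]
  rw [div_le_div_iff_of_pos_right hD]
  have h1 : x ^ (-a) ≤ x ^ (-b) :=
    Real.rpow_le_rpow_of_exponent_ge hx0 hx1.le (by cases abs_le.mp hab; linarith)
  have h2 : x ^ a ≤ x ^ (-b) :=
    Real.rpow_le_rpow_of_exponent_ge hx0 hx1.le (by cases abs_le.mp hab; linarith)
  have h3 : 0 < x ^ a := Real.rpow_pos_of_pos hx0 _
  have h4 : 0 < x ^ (-a) := Real.rpow_pos_of_pos hx0 _
  calc |x ^ (-a) - x ^ a| ≤ |x ^ (-a)| + |x ^ a| := abs_sub _ _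
    _ = x ^ (-a) + x ^ a := by rw [abs_of_pos h4, abs_of_pos h3]
    _ ≤ 2 * x ^ (-b) := by linarith


lemma cf_abs_le (x r : ℝ) (hx0 : 0 < x) (hx1 : x < 1) (hr : 1 < r) (j m : ℕ) (hj : 1 ≤ j) :
    |cf x r 1 j m| ≤ 16 / (x⁻¹ - x) ^ 2 * (x ^ (-(3 * r + 1 + j)) : ℝ) ^ (m + 1) := by
  have hD := Dpos x hx0 hx1
  have hjR : (1:ℝ) ≤ (j:ℝ) := by exact_mod_cast hj
  set M : ℝ := (m : ℝ) + 1 with hM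
  have hM1 : 1 ≤ M := by simp [hM]
  have hden : 1 ≤ qint x M * qint x ((r+1) * M) := by
    have h1 := one_le_qint x M hx0 hx1 hM1
    have h2 := one_le_qint x ((r+1)*M) hx0 hx1 (by nlinarith)
    nlinarith
  have hb1 : |qint x ((r-1) * M)| ≤ 2 * x ^ (-((r-1)*M)) / (x⁻¹ - x) :=
    qint_abs_le x _ _ hx0 hx1 (by rw [abs_of_nonneg (by nlinarith)])
  have hb2 : |qint x (r * M)| ≤ 2 * x ^ (-(r*M)) / (x⁻¹ - x) :=
    qint_abs_le x _ _ hx0 hx1 (by rw [abs_of_nonneg (by nlinarith)])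
  have hb3 : |qint x M| ≤ 2 * x ^ (-M) / (x⁻¹ - x) :=
    qint_abs_le x _ _ hx0 hx1 (by rw [abs_of_nonneg (by nlinarith)])
  have hb4 : |qint x ((r + 1 - j) * M)| ≤ 2 * x ^ (-((r+1+j)*M)) / (x⁻¹ - x) := by
    refine qint_abs_le x _ _ hx0 hx1 ?_
    rw [abs_mul, abs_of_nonneg (by linarith : (0:ℝ) ≤ M)]
    have : |r + 1 - (j:ℝ)| ≤ r + 1 + j := by
      rw [abs_le]; constructor <;> linarith
    nlinarith
  unfold cf
  simp only [Nat.cast_one]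
  rw [min_eq_left hjR, max_eq_right hjR]
  simp only [one_mul]
  have hex : (2 * x ^ (-((r-1)*M)) / (x⁻¹ - x)) * (2 * x ^ (-(r*M)) / (x⁻¹ - x)) *
      (2 * x ^ (-M) / (x⁻¹ - x)) * (2 * x ^ (-((r+1+j)*M)) / (x⁻¹ - x)) * (x⁻¹ - x) ^ 2
      = 16 / (x⁻¹ - x) ^ 2 * (x ^ (-(3 * r + 1 + j)) : ℝ) ^ (m + 1) := by
    have hxp : (x ^ (-(3 * r + 1 + j)) : ℝ) ^ (m + 1) =
        x ^ (-((r-1)*M)) * x ^ (-(r*M)) * x ^ (-M) * x ^ (-((r+1+j)*M)) := by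
      rw [← Real.rpow_natCast (x ^ (-(3 * r + 1 + (j:ℝ)))) (m + 1), ← Real.rpow_mul hx0.le,
          ← Real.rpow_add hx0, ← Real.rpow_add hx0, ← Real.rpow_add hx0]
      congr 1
      push_cast [hM]
      ring
    rw [hxp]
    have key : ∀ (D p1 p2 p3 p4 : ℝ), D ≠ 0 →
        (2*p1/D)*(2*p2/D)*(2*p3/D)*(2*p4/D)*D^2 = 16/D^2*(p1*(p2*(p3*p4))) := by
      intros D p1 p2 p3 p4 hDne
      field_simp
      ring
    rw [key _ _ _ _ _ hD.ne']
    ring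
  calc |qint x ((r-1) * M) * qint x (r * M) * qint x M * qint x ((r + 1 - j) * M) /
        (qint x M * qint x ((r+1) * M)) * (x - x⁻¹) ^ 2|
      = |qint x ((r-1) * M) * qint x (r * M) * qint x M * qint x ((r + 1 - j) * M)| /
        (qint x M * qint x ((r+1) * M)) * (x⁻¹ - x) ^ 2 := by
        rw [abs_mul, abs_div, abs_of_pos (by linarith : (0:ℝ) < qint x M * qint x ((r+1)*M)),
          abs_of_nonneg (sq_nonneg (x - x⁻¹)), show (x - x⁻¹)^2 = (x⁻¹ - x)^2 by ring]
    _ ≤ |qint x ((r-1) * M) * qint x (r * M) * qint x M * qint x ((r + 1 - j) * M)| * (x⁻¹ - x) ^ 2 := by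
        have := div_le_self (abs_nonneg (qint x ((r-1) * M) * qint x (r * M) * qint x M *
          qint x ((r + 1 - j) * M))) hden
        nlinarith [sq_nonneg (x⁻¹ - x)]
    _ = |qint x ((r-1) * M)| * |qint x (r * M)| * |qint x M| * |qint x ((r + 1 - j) * M)| * (x⁻¹ - x) ^ 2 := by
        rw [abs_mul, abs_mul, abs_mul]
    _ ≤ (2 * x ^ (-((r-1)*M)) / (x⁻¹ - x)) * (2 * x ^ (-(r*M)) / (x⁻¹ - x)) *
        (2 * x ^ (-M) / (x⁻¹ - x)) * (2 * x ^ (-((r+1+j)*M)) / (x⁻¹ - x)) * (x⁻¹ - x) ^ 2 := by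
        gcongr <;> positivity
    _ = 16 / (x⁻¹ - x) ^ 2 * (x ^ (-(3 * r + 1 + j)) : ℝ) ^ (m + 1) := hex

lemma summable_aux (x r : ℝ) (hx0 : 0 < x) (hx1 : x < 1) (hr : 1 < r) (j : ℕ) (hj : 1 ≤ j)
    (w : ℂ) (hw : ‖w‖ < x ^ (3 * r + 1 + (j:ℝ))) :
    Summable (fun m : ℕ => ((cf x r 1 j m : ℝ) : ℂ) * w ^ (m + 1) / ((m : ℂ) + 1)) := by
  have hD := Dpos x hx0 hx1
  set q : ℝ := x ^ (-(3 * r + 1 + (j:ℝ))) * ‖w‖ with hq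
  have hq0 : 0 ≤ q := by positivity
  have hq1 : q < 1 := by
    rw [hq]
    calc x ^ (-(3*r+1+(j:ℝ))) * ‖w‖ < x ^ (-(3*r+1+(j:ℝ))) * x ^ (3*r+1+(j:ℝ)) := by
          have := Real.rpow_pos_of_pos hx0 (-(3*r+1+(j:ℝ)))
          gcongr
      _ = 1 := by
          rw [← Real.rpow_add hx0, show -(3*r+1+(j:ℝ)) + (3*r+1+(j:ℝ)) = 0 by ring,
            Real.rpow_zero]
  apply Summable.of_norm
  have hb : ∀ m : ℕ, ‖((cf x r 1 j m : ℝ) : ℂ) * w ^ (m + 1) / ((m : ℂ) + 1)‖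
      ≤ (16 / (x⁻¹ - x)^2 * q) * q ^ m := by
    intro m
    rw [norm_div, norm_mul, Complex.norm_real, norm_pow, Real.norm_eq_abs]
    have hm1 : (1:ℝ) ≤ ‖((m:ℂ)+1)‖ := by
      have h : ((m:ℂ)+1) = (((m+1 : ℕ) : ℝ) : ℂ) := by push_cast; ring
      rw [h, Complex.norm_real, Real.norm_eq_abs, Nat.abs_cast]
      exact_mod_cast Nat.succ_le_succ (Nat.zero_le m)
    calc |cf x r 1 j m| * ‖w‖^(m+1) / ‖((m:ℂ)+1)‖
        ≤ |cf x r 1 j m| * ‖w‖^(m+1) := div_le_self (by positivity) hm1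
      _ ≤ (16/(x⁻¹-x)^2 * (x ^ (-(3*r+1+(j:ℝ))))^(m+1)) * ‖w‖^(m+1) :=
          mul_le_mul_of_nonneg_right (cf_abs_le x r hx0 hx1 hr j m hj) (by positivity)
      _ = 16/(x⁻¹-x)^2 * q^(m+1) := by rw [hq, mul_pow]; ring
      _ = (16/(x⁻¹-x)^2 * q) * q^m := by rw [pow_succ]; ring
  exact Summable.of_nonneg_of_le (fun m => norm_nonneg _) hb
    ((summable_geometric_of_lt_one hq0 hq1).mul_left _)

/-- `f_{i,j}(z) = ∏_{k=1}^i f_{1,j}(x^{-i-1+2k} z)` for `1 ≤ i ≤ j`. -/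
theorem f_fusion_product (x : ℝ) (hx0 : 0 < x) (hx1 : x < 1) (r : ℝ) (hr : 1 < r)
    (i j : ℕ) (hi : 1 ≤ i) (hij : i ≤ j) :
    ∃ ε > 0, ∀ z : ℂ, ‖z‖ < ε →
      ff x r i j z
        = ∏ k ∈ Finset.Icc 1 i, ff x r 1 j (((x ^ (2 * (k : ℤ) - i - 1) : ℝ) : ℂ) * z) := by
  have hj : 1 ≤ j := hi.trans hij
  refine ⟨x ^ (3*r+1+(j:ℝ) + i), Real.rpow_pos_of_pos hx0 _, fun z hz => ?_⟩
  have hsum : ∀ k ∈ Finset.Icc 1 i,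
      Summable (fun m : ℕ => ((cf x r 1 j m : ℝ):ℂ) *
        (((x ^ (2*(k:ℤ) - i - 1) : ℝ):ℂ) * z)^(m+1) / ((m:ℂ)+1)) := by
    intro k hk
    apply summable_aux x r hx0 hx1 hr j hj
    have hk1 : 1 ≤ k := (Finset.mem_Icc.mp hk).1
    have hxt : (x : ℝ) ^ (2*(k:ℤ) - i - 1) ≤ x ^ (-(i:ℝ)) := by
      rw [← Real.rpow_intCast x (2*(k:ℤ) - i - 1)]
      apply Real.rpow_le_rpow_of_exponent_ge hx0 hx1.le
      push_cast
      have : (1:ℝ) ≤ k := by exact_mod_cast hk1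
      linarith
    have hxt0 : (0:ℝ) < x ^ (2*(k:ℤ) - i - 1) := zpow_pos hx0 _
    rw [norm_mul, Complex.norm_real, Real.norm_eq_abs, abs_of_pos hxt0]
    calc x ^ (2*(k:ℤ) - i - 1) * ‖z‖
        ≤ x ^ (-(i:ℝ)) * ‖z‖ := mul_le_mul_of_nonneg_right hxt (norm_nonneg z)
      _ < x ^ (-(i:ℝ)) * x ^ (3*r+1+(j:ℝ)+i) :=
          mul_lt_mul_of_pos_left hz (Real.rpow_pos_of_pos hx0 _)
      _ = x ^ (3*r+1+(j:ℝ)) := by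
          rw [← Real.rpow_add hx0]; congr 1; ring
  simp only [ff_eq]
  rw [← Complex.exp_sum]
  congr 1
  rw [Finset.sum_neg_distrib]
  congr 1
  rw [← Summable.tsum_finsetSum hsum]
  exact tsum_congr fun m => summand_eq x r hx0 i j m hi hij z
end

section
/- Let $0<x<1$, $r>1$, $s=r+1$, and let $f_{i,j}(z)$, $\Delta_1(z)$ be the structure functions of $\mathcal{W}_{q,t}(\mathfrak{sl}(2|1))$. Then for integers $1 \leq j < i$, the fusion relation $f_{1,i}(z)\, f_{j,i}(x^{j+1} z) = f_{j+1,i}(x^{j} z)$ holds (without a $\Delta_1$ factor), as formal power series in $z$. -/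
noncomputable def fterm (x r : ℝ) (i j : ℕ) (z : ℂ) (m : ℕ) : ℂ :=
  ((qint x ((r - 1) * (m + 1)) * qint x (r * (m + 1)) * qint x ((min i j : ℝ) * (m + 1)) *
        qint x ((r + 1 - (max i j : ℝ)) * (m + 1)) /
        (qint x ((m : ℝ) + 1) * qint x ((r + 1) * (m + 1))) * (x - x⁻¹) ^ 2 : ℝ) : ℂ)
      * z ^ (m + 1) / ((m : ℂ) + 1)

lemma ff_eq_fterm (x r : ℝ) (i j : ℕ) (z : ℂ) :
    ff x r i j z = Complex.exp (-∑' m : ℕ, fterm x r i j z m) := rfl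

-- key q-integer identity
lemma key_qint {x : ℝ} (hx0 : 0 < x) (hx1 : x < 1) (j n : ℝ) :
    qint x n + qint x (j * n) * x ^ ((j + 1) * n)
      = qint x ((j + 1) * n) * x ^ (j * n) := by
  have hd : x - x⁻¹ ≠ 0 := by
    have : 1 < x⁻¹ := (one_lt_inv₀ hx0).2 hx1
    nlinarith
  have hneg : ∀ a : ℝ, x ^ (-a) = (x ^ a)⁻¹ := fun a => Real.rpow_neg hx0.le a
  have hjn : x ^ ((j + 1) * n) = x ^ (j * n) * x ^ n := by
    rw [← Real.rpow_add hx0]; ring_nf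
  have hu : x ^ (j * n) ≠ 0 := (Real.rpow_pos_of_pos hx0 _).ne'
  have hv : x ^ (n : ℝ) ≠ 0 := (Real.rpow_pos_of_pos hx0 _).ne'
  have hmv : x ^ (-((j+1)*n)) = (x ^ (j*n) * x ^ n)⁻¹ := by rw [hneg, hjn]
  simp only [qint, hneg, hjn, hmv]
  generalize x ^ (j*n) = u at hu ⊢
  generalize x ^ (n:ℝ) = v at hv ⊢
  rw [div_mul_eq_mul_div, div_mul_eq_mul_div, ← add_div]
  congr 1
  field_simp
  ring

lemma npow_eq_rpow {x : ℝ} (hx0 : 0 < x) (k m : ℕ) :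
    ((x ^ k) ^ (m + 1) : ℝ) = x ^ ((k : ℝ) * ((m : ℝ) + 1)) := by
  rw [← Real.rpow_natCast x k, ← Real.rpow_natCast (x ^ (k:ℝ)) (m+1),
    ← Real.rpow_mul hx0.le]
  push_cast; ring_nf

lemma cnpow {x : ℝ} (hx0 : 0 < x) (k m : ℕ) :
    (((x ^ k : ℝ)) : ℂ) ^ (m + 1) = ((x ^ ((k : ℝ) * ((m : ℝ) + 1)) : ℝ) : ℂ) := by
  rw [← Complex.ofReal_pow, npow_eq_rpow hx0]

lemma fterm_add {x r : ℝ} (hx0 : 0 < x) (hx1 : x < 1) {i j : ℕ}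
    (hj : 1 ≤ j) (hji : j < i) (z : ℂ) (m : ℕ) :
    fterm x r 1 i z m + fterm x r j i (((x ^ (j + 1) : ℝ) : ℂ) * z) m
      = fterm x r (j + 1) i (((x ^ j : ℝ) : ℂ) * z) m := by
  have key := key_qint hx0 hx1 (j : ℝ) ((m : ℝ) + 1)
  have keyC := congrArg (Complex.ofReal) key
  push_cast at keyC
  simp only [fterm]
  rw [mul_pow, mul_pow, cnpow hx0 (j+1) m, cnpow hx0 j m]
  push_cast
  rw [min_eq_left (show (1:ℝ) ≤ (i:ℝ) by exact_mod_cast by omega),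
    max_eq_right (show (1:ℝ) ≤ (i:ℝ) by exact_mod_cast by omega),
    min_eq_left (show (j:ℝ) ≤ (i:ℝ) by exact_mod_cast by omega),
    max_eq_right (show (j:ℝ) ≤ (i:ℝ) by exact_mod_cast by omega),
    min_eq_left (show (j:ℝ) + 1 ≤ (i:ℝ) by exact_mod_cast hji),
    max_eq_right (show (j:ℝ) + 1 ≤ (i:ℝ) by exact_mod_cast hji),
    one_mul ((m:ℝ) + 1)]
  linear_combination (((qint x ((r-1) * ((m:ℝ)+1)) : ℝ) : ℂ) *
    ((qint x (r * ((m:ℝ)+1)) : ℝ) : ℂ) * ((qint x ((r+1-(i:ℝ)) * ((m:ℝ)+1)) : ℝ) : ℂ) /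
    (((qint x ((m:ℝ)+1) : ℝ) : ℂ) * ((qint x ((r+1) * ((m:ℝ)+1)) : ℝ) : ℂ)) *
    ((x:ℂ) - (x:ℂ)⁻¹)^2 * z^(m+1) / ((m:ℂ)+1)) * keyC

lemma abs_pow_sub {x : ℝ} (hx0 : 0 < x) (hx1 : x < 1) (a : ℝ) :
    |x ^ a - x ^ (-a)| ≤ x ^ (-|a|) := by
  rcases abs_cases a with ⟨h, h0⟩ | ⟨h, h0⟩
  · have hle : x ^ a ≤ x ^ (-a) :=
      Real.rpow_le_rpow_of_exponent_ge hx0 hx1.le (by linarith)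
    rw [h, abs_sub_comm, abs_of_nonneg (sub_nonneg.2 hle)]
    have := Real.rpow_pos_of_pos hx0 a
    linarith
  · have hle : x ^ (-a) ≤ x ^ a :=
      Real.rpow_le_rpow_of_exponent_ge hx0 hx1.le (by linarith)
    rw [h, neg_neg, abs_of_nonneg (sub_nonneg.2 hle)]
    have := Real.rpow_pos_of_pos hx0 (-a)
    linarith

lemma lower_pow_sub {x : ℝ} (hx0 : 0 < x) (hx1 : x < 1) {a : ℝ} (ha : 1 ≤ a) :
    x ^ (-a) * (1 - x * x) ≤ x ^ (-a) - x ^ a := by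
  have h1 : x ^ a = x ^ (-a) * x ^ (2 * a) := by
    rw [← Real.rpow_add hx0]; ring_nf
  have h2 : x ^ (2 * a) ≤ x ^ (2 : ℝ) :=
    Real.rpow_le_rpow_of_exponent_ge hx0 hx1.le (by linarith)
  have h3 : (0:ℝ) < x ^ (-a) := Real.rpow_pos_of_pos hx0 _
  have h4 : x ^ (2:ℝ) = x * x := by
    rw [show (2:ℝ) = ((2:ℕ):ℝ) by norm_num, Real.rpow_natCast]; ring
  rw [h4] at h2
  have h5 := mul_le_mul_of_nonneg_left h2 h3.le
  rw [h1]; nlinarith [h5]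

set_option maxHeartbeats 1000000 in
lemma coeff_bound {x r : ℝ} (hx0 : 0 < x) (hx1 : x < 1) (hr : 1 < r) (i j m : ℕ) :
    |qint x ((r - 1) * (m + 1)) * qint x (r * (m + 1)) * qint x ((min i j : ℝ) * (m + 1)) *
        qint x ((r + 1 - (max i j : ℝ)) * (m + 1)) /
        (qint x ((m : ℝ) + 1) * qint x ((r + 1) * (m + 1))) * (x - x⁻¹) ^ 2|
      ≤ (x ^ (-(4 * (r + 2 + (i:ℝ) + (j:ℝ)))) / (1 - x * x) ^ 2) ^ (m + 1) := by
  have hd : 0 < x⁻¹ - x := by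
    have : 1 < x⁻¹ := (one_lt_inv₀ hx0).2 hx1
    nlinarith
  have hq : 0 < 1 - x * x := by nlinarith
  set E : ℝ := r + 2 + (i:ℝ) + (j:ℝ) with hE
  set n : ℝ := (m : ℝ) + 1 with hn
  have hn1 : 1 ≤ n := by
    rw [hn]; linarith [(Nat.cast_nonneg m : (0:ℝ) ≤ (m:ℝ))]
  have habs : ∀ a : ℝ, |qint x a| ≤ x ^ (-|a|) / (x⁻¹ - x) := by
    intro a
    rw [qint, abs_div, abs_sub_comm x x⁻¹, abs_of_pos hd]
    gcongr
    exact abs_pow_sub hx0 hx1 a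
  have hEb : ∀ a : ℝ, |a| ≤ E → |qint x (a * n)| ≤ x ^ (-(E * n)) / (x⁻¹ - x) := by
    intro a ha
    refine (habs (a * n)).trans ?_
    have hexp : -(E * n) ≤ -|a * n| := by
      rw [abs_mul, abs_of_nonneg (by linarith : (0:ℝ) ≤ n)]
      nlinarith [abs_nonneg a, mul_nonneg (sub_nonneg.2 ha) (by linarith : (0:ℝ) ≤ n)]
    exact div_le_div_of_nonneg_right (Real.rpow_le_rpow_of_exponent_ge hx0 hx1.le hexp) hd.le
  have hlow : ∀ a : ℝ, 1 ≤ a → x ^ (-a) * (1 - x * x) / (x⁻¹ - x) ≤ |qint x a| := by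
    intro a ha
    rw [qint, abs_div, abs_sub_comm x x⁻¹, abs_of_pos hd]
    gcongr
    calc x ^ (-a) * (1 - x * x) ≤ x ^ (-a) - x ^ a := lower_pow_sub hx0 hx1 ha
      _ = -(x ^ a - x ^ (-a)) := by ring
      _ ≤ |x ^ a - x ^ (-a)| := neg_le_abs _
  have hi0 : (0:ℝ) ≤ (i:ℝ) := Nat.cast_nonneg i
  have hj0 : (0:ℝ) ≤ (j:ℝ) := Nat.cast_nonneg j
  have hminE : |(min (i:ℝ) (j:ℝ))| ≤ E := by
    rw [abs_of_nonneg (le_min hi0 hj0), hE]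
    have := min_le_left (i:ℝ) (j:ℝ); linarith
  have hmaxE : |r + 1 - max (i:ℝ) (j:ℝ)| ≤ E := by
    have h1 : max (i:ℝ) (j:ℝ) ≤ (i:ℝ) + (j:ℝ) := max_le (by linarith) (by linarith)
    have h2 : (0:ℝ) ≤ max (i:ℝ) (j:ℝ) := le_max_of_le_left hi0
    rw [abs_le, hE]; constructor <;> linarith
  have hq1 := hEb (r - 1) (by rw [abs_of_nonneg (by linarith), hE]; linarith)
  have hq2 := hEb r (by rw [abs_of_nonneg (by linarith), hE]; linarith)
  have hq3 := hEb (min (i:ℝ) (j:ℝ)) hminE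
  have hq4 := hEb (r + 1 - max (i:ℝ) (j:ℝ)) hmaxE
  have hq5 := hlow n hn1
  have hq6 := hlow ((r + 1) * n) (by
    have h := mul_le_mul (show (1:ℝ) ≤ r + 1 by linarith) hn1 zero_le_one (by linarith)
    linarith)
  have hXpos : (0:ℝ) < x ^ (-(E * n)) / (x⁻¹ - x) :=
    div_pos (Real.rpow_pos_of_pos hx0 _) hd
  have hp5 : (0:ℝ) < x ^ (-n) * (1 - x * x) / (x⁻¹ - x) :=
    div_pos (mul_pos (Real.rpow_pos_of_pos hx0 _) hq) hd
  have hp6 : (0:ℝ) < x ^ (-((r + 1) * n)) * (1 - x * x) / (x⁻¹ - x) :=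
    div_pos (mul_pos (Real.rpow_pos_of_pos hx0 _) hq) hd
  rw [abs_mul, abs_div, abs_mul, abs_mul, abs_mul, abs_mul, abs_pow, abs_sub_comm x x⁻¹,
    abs_of_pos hd]
  set X : ℝ := x ^ (-(E * n)) / (x⁻¹ - x) with hX
  have hnum : |qint x ((r - 1) * n)| * |qint x (r * n)| * |qint x (min (i:ℝ) (j:ℝ) * n)| *
      |qint x ((r + 1 - max (i:ℝ) (j:ℝ)) * n)| ≤ X * X * X * X := by
    have h12 : |qint x ((r - 1) * n)| * |qint x (r * n)| ≤ X * X :=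
      mul_le_mul hq1 hq2 (abs_nonneg _) hXpos.le
    have h123 : |qint x ((r - 1) * n)| * |qint x (r * n)| * |qint x (min (i:ℝ) (j:ℝ) * n)|
        ≤ X * X * X :=
      mul_le_mul h12 hq3 (abs_nonneg _) (by positivity)
    exact mul_le_mul h123 hq4 (abs_nonneg _) (by positivity)
  have hden : x ^ (-n) * (1 - x * x) / (x⁻¹ - x) *
        (x ^ (-((r + 1) * n)) * (1 - x * x) / (x⁻¹ - x))
      ≤ |qint x n| * |qint x ((r + 1) * n)| :=
    mul_le_mul hq5 hq6 hp6.le (abs_nonneg _)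
  have step1 := mul_le_mul_of_nonneg_right
    (div_le_div₀ (by positivity) hnum (mul_pos hp5 hp6) hden)
    (by positivity : (0:ℝ) ≤ (x⁻¹ - x) ^ 2)
  refine step1.trans ?_
  -- now pure computation
  have hWpos : (0:ℝ) < x ^ (4 * E * n) := Real.rpow_pos_of_pos hx0 _
  have hupos : (0:ℝ) < x ^ (n:ℝ) := Real.rpow_pos_of_pos hx0 _
  have hvpos : (0:ℝ) < x ^ ((r + 1) * n) := Real.rpow_pos_of_pos hx0 _
  have eX : x ^ (-(E * n)) * x ^ (-(E * n)) * x ^ (-(E * n)) * x ^ (-(E * n))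
      = (x ^ (4 * E * n))⁻¹ := by
    rw [← Real.rpow_add hx0, ← Real.rpow_add hx0, ← Real.rpow_add hx0,
      show -(E * n) + -(E * n) + -(E * n) + -(E * n) = -(4 * E * n) by ring,
      Real.rpow_neg hx0.le]
  have e5 : x ^ (-n) = (x ^ (n:ℝ))⁻¹ := Real.rpow_neg hx0.le n
  have e6 : x ^ (-((r + 1) * n)) = (x ^ ((r + 1) * n))⁻¹ := Real.rpow_neg hx0.le _
  have eK : (x ^ (-(4 * E))) ^ (m + 1) = (x ^ (4 * E * n))⁻¹ := by
    rw [← Real.rpow_natCast (x ^ (-(4 * E))) (m + 1), ← Real.rpow_mul hx0.le,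
      show -(4 * E) * ((m + 1 : ℕ) : ℝ) = -(4 * E * n) by push_cast [hn]; ring,
      Real.rpow_neg hx0.le]
  have euv : x ^ (n:ℝ) * x ^ ((r + 1) * n) ≤ 1 := by
    rw [← Real.rpow_add hx0]
    exact Real.rpow_le_one hx0.le hx1.le (by
      have := mul_nonneg (show (0:ℝ) ≤ r + 1 by linarith) (show (0:ℝ) ≤ n by linarith)
      linarith)
  have eq2 : ((1 - x * x) ^ 2) ^ (m + 1) ≤ (1 - x * x) ^ 2 := by
    have h1 : (1 - x * x) ^ 2 ≤ 1 := pow_le_one₀ hq.le (by nlinarith)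
    calc ((1 - x * x) ^ 2) ^ (m + 1) ≤ ((1 - x * x) ^ 2) ^ 1 :=
          pow_le_pow_of_le_one (by positivity) h1 (by omega)
      _ = (1 - x * x) ^ 2 := pow_one _
  have hdne : x⁻¹ - x ≠ 0 := hd.ne'
  have hRe : X * X * X * X /
        (x ^ (-n) * (1 - x * x) / (x⁻¹ - x) *
          (x ^ (-((r + 1) * n)) * (1 - x * x) / (x⁻¹ - x))) * (x⁻¹ - x) ^ 2
      = x ^ (n:ℝ) * x ^ ((r + 1) * n) * (x ^ (4 * E * n))⁻¹ / (1 - x * x) ^ 2 := by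
    rw [hX, e5, e6, div_mul_div_comm, div_mul_div_comm, div_mul_div_comm, eX]
    field_simp
  rw [hRe, div_pow, eK, div_le_div_iff₀ (by positivity) (by positivity)]
  have hmain : x ^ (n:ℝ) * x ^ ((r + 1) * n) * ((1 - x * x) ^ 2) ^ (m + 1)
      ≤ 1 * ((1 - x * x) ^ 2) :=
    mul_le_mul euv eq2 (by positivity) zero_le_one
  calc x ^ (n:ℝ) * x ^ ((r + 1) * n) * (x ^ (4 * E * n))⁻¹ * ((1 - x * x) ^ 2) ^ (m + 1)
      = x ^ (n:ℝ) * x ^ ((r + 1) * n) * ((1 - x * x) ^ 2) ^ (m + 1) * (x ^ (4 * E * n))⁻¹ := by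
        ring
    _ ≤ 1 * ((1 - x * x) ^ 2) * (x ^ (4 * E * n))⁻¹ :=
        mul_le_mul_of_nonneg_right hmain (by positivity)
    _ = (x ^ (4 * E * n))⁻¹ * (1 - x * x) ^ 2 := by ring

lemma norm_fterm_le {x r : ℝ} (hx0 : 0 < x) (hx1 : x < 1) (hr : 1 < r)
    (i j : ℕ) (z : ℂ) (m : ℕ) :
    ‖fterm x r i j z m‖
      ≤ ((x ^ (-(4 * (r + 2 + (i:ℝ) + (j:ℝ)))) / (1 - x * x) ^ 2) * ‖z‖) ^ (m + 1) := by
  have hm : ‖((m:ℂ) + 1)‖ = (m:ℝ) + 1 := by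
    rw [show ((m:ℂ) + 1) = ((m + 1 : ℕ) : ℂ) by push_cast; ring, Complex.norm_natCast]
    push_cast; ring
  have hm1 : (1:ℝ) ≤ ‖((m:ℂ) + 1)‖ := by
    rw [hm]; linarith [(Nat.cast_nonneg m : (0:ℝ) ≤ (m:ℝ))]
  rw [fterm, norm_div, norm_mul, Complex.norm_real, Real.norm_eq_abs, norm_pow]
  have h1 := coeff_bound hx0 hx1 hr i j m
  calc |_| * ‖z‖ ^ (m + 1) / ‖((m:ℂ) + 1)‖
      ≤ |_| * ‖z‖ ^ (m + 1) / 1 :=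
        div_le_div_of_nonneg_left (by positivity) one_pos hm1
    _ = |_| * ‖z‖ ^ (m + 1) := div_one _
    _ ≤ (x ^ (-(4 * (r + 2 + (i:ℝ) + (j:ℝ)))) / (1 - x * x) ^ 2) ^ (m + 1) * ‖z‖ ^ (m + 1) :=
        mul_le_mul_of_nonneg_right h1 (by positivity)
    _ = ((x ^ (-(4 * (r + 2 + (i:ℝ) + (j:ℝ)))) / (1 - x * x) ^ 2) * ‖z‖) ^ (m + 1) :=
        (mul_pow _ _ _).symm

lemma summable_fterm {x r : ℝ} (hx0 : 0 < x) (hx1 : x < 1) (hr : 1 < r) (i j : ℕ) :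
    ∃ ε > 0, ∀ z : ℂ, ‖z‖ < ε → Summable (fterm x r i j z) := by
  have hq : (0:ℝ) < 1 - x * x := by nlinarith
  set K : ℝ := x ^ (-(4 * (r + 2 + (i:ℝ) + (j:ℝ)))) / (1 - x * x) ^ 2 with hK
  have hKpos : 0 < K := div_pos (Real.rpow_pos_of_pos hx0 _) (by positivity)
  refine ⟨1 / (2 * K), by positivity, fun z hz => ?_⟩
  have hgeo : Summable (fun m : ℕ => (1/2 : ℝ) ^ (m + 1)) := by
    have h := summable_geometric_of_lt_one (by norm_num : (0:ℝ) ≤ 1/2) (by norm_num)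
    exact (h.mul_right (1/2)).congr fun m => (pow_succ _ m).symm
  refine Summable.of_norm_bounded hgeo fun m => ?_
  refine (norm_fterm_le hx0 hx1 hr i j z m).trans ?_
  have hKz : K * ‖z‖ ≤ 1/2 := by
    have h1 : K * ‖z‖ < K * (1 / (2 * K)) := by
      exact mul_lt_mul_of_pos_left hz hKpos
    have h2 : K * (1 / (2 * K)) = 1/2 := by field_simp
    linarith
  exact pow_le_pow_left₀ (by positivity) hKz (m + 1)


/-- Fusion relation `f_{1,i}(z) f_{j,i}(x^{j+1} z) = f_{j+1,i}(x^j z)` for `1 ≤ j < i`. -/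
theorem f_fusion_no_delta (x : ℝ) (hx0 : 0 < x) (hx1 : x < 1) (r : ℝ) (hr : 1 < r)
    (i j : ℕ) (hj : 1 ≤ j) (hji : j < i) :
    ∃ ε > 0, ∀ z : ℂ, ‖z‖ < ε →
      ff x r 1 i z * ff x r j i (((x ^ (j + 1) : ℝ) : ℂ) * z)
        = ff x r (j + 1) i (((x ^ j : ℝ) : ℂ) * z) := by
  obtain ⟨ε₁, hε₁, h₁⟩ := summable_fterm hx0 hx1 hr 1 i
  obtain ⟨ε₂, hε₂, h₂⟩ := summable_fterm hx0 hx1 hr j i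
  refine ⟨min ε₁ ε₂, lt_min hε₁ hε₂, fun z hz => ?_⟩
  have ha := h₁ z (hz.trans_le (min_le_left _ _))
  have hxp1 : ‖(((x ^ (j + 1) : ℝ)) : ℂ) * z‖ ≤ ‖z‖ := by
    rw [norm_mul, Complex.norm_real, Real.norm_eq_abs,
      abs_of_pos (pow_pos hx0 _)]
    exact mul_le_of_le_one_left (norm_nonneg z) (pow_le_one₀ hx0.le hx1.le)
  have hb := h₂ _ (lt_of_le_of_lt hxp1 (hz.trans_le (min_le_right _ _)))
  rw [ff_eq_fterm, ff_eq_fterm, ff_eq_fterm, ← Complex.exp_add, ← neg_add]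
  congr 2
  rw [← Summable.tsum_add ha hb]
  exact tsum_congr fun m => fterm_add hx0 hx1 hj hji z m
end
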